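/- The function f(u) = (exp_φ(u) - 1)/u (with f(0) = 1/2) is 1/2-Lipschitz: |f(u) - f(v)| ≤ (1/2)|u - v| for all real u, v. -/

import Mathlib

open Real Set

private noncomputable def Af (x : ℝ) : ℝ := x - 1 - Real.log x
private noncomputable def Bf (x : ℝ) : ℝ := x - 1 + Real.log x
private noncomputable def Pf (x : ℝ) : ℝ := Af x / Bf x
private noncomputable def Qf (x : ℝ) : ℝ := Bf x - Pf x

private lemma hA {x : ℝ} (hx : 0 < x) : 0 ≤ Af x := by
  have := Real.log_le_sub_one_of_pos hx
  simp only [Af]; linarith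

private lemma hlog_ge {x : ℝ} (hx : 0 < x) : 1 - x⁻¹ ≤ Real.log x :=
  Real.one_sub_inv_le_log_of_pos hx

private lemma hBneg {x : ℝ} (hx : 0 < x) (hx1 : x < 1) : Bf x < 0 := by
  have := Real.log_le_sub_one_of_pos hx
  simp only [Bf]; linarith

private lemma hBpos {x : ℝ} (hx1 : 1 < x) : 0 < Bf x := by
  have hx : (0:ℝ) < x := by linarith
  have h := hlog_ge hx
  have : x⁻¹ < 1 := by
    rw [inv_lt_one_iff₀]; right; exact hx1
  simp only [Bf]; linarith

private lemma hB1 : Bf 1 = 0 := by simp [Bf]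

private lemma hA1 : Af 1 = 0 := by simp [Af]

private lemma hBne {x : ℝ} (hx : 0 < x) (hx1 : x ≠ 1) : Bf x ≠ 0 := by
  rcases lt_or_gt_of_ne hx1 with h | h
  · exact ne_of_lt (hBneg hx h)
  · exact ne_of_gt (hBpos h)

/-- key inequality (★): `(x+1) * Bf x ^ 2 ≥ 2 * (x * log x - x + 1)` -/
private lemma star {x : ℝ} (hx : 0 < x) :
    2 * (x * Real.log x - x + 1) ≤ (x + 1) * (Bf x) ^ 2 := by
  have h1 := Real.log_le_sub_one_of_pos hx
  have h2 := hlog_ge hx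
  have h3 : x - 1 ≤ x * Real.log x := by
    have := mul_le_mul_of_nonneg_left h2 hx.le
    have hxi : x * x⁻¹ = 1 := mul_inv_cancel₀ hx.ne'
    nlinarith
  simp only [Bf]
  rcases le_total x 1 with hle | hge
  · -- x ≤ 1: B ≤ 2(x-1) ≤ 0, so B² ≥ 4(x-1)²; RHS ≤ 2(x-1)²
    have hB2 : Real.log x + (x - 1) ≤ 2 * (x - 1) := by linarith
    have hxl : x * Real.log x ≤ x * (x - 1) :=
      mul_le_mul_of_nonneg_left h1 hx.le
    nlinarith [sq_nonneg (x - 1 + Real.log x), sq_nonneg (x - 1), sq_nonneg (x - 1 - Real.log x)]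
  · -- x ≥ 1
    have hxl : x * Real.log x ≤ x * (x - 1) :=
      mul_le_mul_of_nonneg_left h1 hx.le
    have hBlb : (x - 1) * (x + 1) ≤ x * (x - 1 + Real.log x) := by nlinarith
    have hBnn : 0 ≤ x - 1 + Real.log x := by nlinarith
    nlinarith [sq_nonneg (x - 1), sq_nonneg (x*(x - 1 + Real.log x) - (x-1)*(x+1)),
      mul_le_mul_of_nonneg_left hBlb (mul_nonneg hx.le hBnn)]

/-- `Af x ≤ (Bf x)^2` -/
private lemma keyBA {x : ℝ} (hx : 0 < x) : Af x ≤ (Bf x) ^ 2 := by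
  have h1 := Real.log_le_sub_one_of_pos hx
  have h2 := hlog_ge hx
  have h3 : x - 1 ≤ x * Real.log x := by
    have := mul_le_mul_of_nonneg_left h2 hx.le
    have hxi : x * x⁻¹ = 1 := mul_inv_cancel₀ hx.ne'
    nlinarith
  have hxA : x * Af x ≤ (x - 1) ^ 2 := by
    simp only [Af]; nlinarith
  simp only [Af, Bf] at *
  rcases le_total 1 x with hge | hle
  · -- x ≥ 1
    have hBnn : 0 ≤ x - 1 + Real.log x := by nlinarith
    have hBlb : (x - 1) * (x + 1) ≤ x * (x - 1 + Real.log x) := by nlinarith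
    nlinarith [sq_nonneg (x*(x - 1 + Real.log x) - (x-1)*(x+1)), sq_nonneg (x-1),
      mul_le_mul_of_nonneg_left hBlb (mul_nonneg hx.le hBnn)]
  · -- x ≤ 1 : split on log x ≤ -1
    rcases le_total (Real.log x) (-1) with hl | hl
    · -- s = -log x ≥ 1
      nlinarith [sq_nonneg (x - 1 + Real.log x), sq_nonneg (x-1)]
    · -- log x ≥ -1 so x > 1/4
      have hx4 : (1:ℝ)/4 < x := by
        by_contra hcon
        push_neg at hcon
        have : Real.log x ≤ Real.log (1/4) := by
          apply Real.log_le_log hx hcon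
        rw [show (1:ℝ)/4 = (2:ℝ)⁻¹^2 by norm_num, Real.log_pow, Real.log_inv] at this
        have h2lt := Real.log_two_gt_d9
        push_cast at this
        linarith
      -- B ≤ 2(x-1) ≤ 0 : B² ≥ 4(x-1)² ; A ≤ (x-1)²/x ≤ 4(x-1)²
      nlinarith [sq_nonneg (x - 1 + Real.log x), sq_nonneg (x-1)]

private lemma hasDerivAf {x : ℝ} (hx : x ≠ 0) : HasDerivAt Af (1 - x⁻¹) x := by
  exact ((hasDerivAt_id x).sub_const 1).sub (Real.hasDerivAt_log hx)

private lemma hasDerivBf {x : ℝ} (hx : x ≠ 0) : HasDerivAt Bf (1 + x⁻¹) x := by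
  exact ((hasDerivAt_id x).sub_const 1).add (Real.hasDerivAt_log hx)

private lemma hasDerivPf {x : ℝ} (hx : x ≠ 0) (hB : Bf x ≠ 0) :
    HasDerivAt Pf (((1 - x⁻¹) * Bf x - Af x * (1 + x⁻¹)) / (Bf x) ^ 2) x :=
  (hasDerivAf hx).div (hasDerivBf hx) hB

/-- numerator identity -/
private lemma numId {x : ℝ} (hx : 0 < x) :
    (1 - x⁻¹) * Bf x - Af x * (1 + x⁻¹) = 2 * (x * Real.log x - x + 1) / x := by
  have hx' : x ≠ 0 := hx.ne'
  simp only [Af, Bf]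
  field_simp
  ring

private lemma numNonneg {x : ℝ} (hx : 0 < x) :
    0 ≤ (1 - x⁻¹) * Bf x - Af x * (1 + x⁻¹) := by
  rw [numId hx]
  apply div_nonneg _ hx.le
  have h2 := hlog_ge hx
  have h3 : x - 1 ≤ x * Real.log x := by
    have := mul_le_mul_of_nonneg_left h2 hx.le
    have hxi : x * x⁻¹ = 1 := mul_inv_cancel₀ hx.ne'
    nlinarith
  linarith

private lemma derivPf_nonneg {x : ℝ} (hx : 0 < x) (hB : Bf x ≠ 0) : 0 ≤ deriv Pf x := by
  rw [(hasDerivPf hx.ne' hB).deriv]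
  exact div_nonneg (numNonneg hx) (sq_nonneg _)

private lemma hasDerivQf {x : ℝ} (hx : x ≠ 0) (hB : Bf x ≠ 0) :
    HasDerivAt Qf ((1 + x⁻¹) - ((1 - x⁻¹) * Bf x - Af x * (1 + x⁻¹)) / (Bf x) ^ 2) x :=
  (hasDerivBf hx).sub (hasDerivPf hx hB)

private lemma derivQf_nonneg {x : ℝ} (hx : 0 < x) (hB : Bf x ≠ 0) : 0 ≤ deriv Qf x := by
  rw [(hasDerivQf hx.ne' hB).deriv, sub_nonneg, numId hx]
  rw [div_div, div_le_iff₀ (by positivity : (0:ℝ) < x * Bf x ^ 2)]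
  have hstar := star hx
  have hxi : x⁻¹ * x = 1 := inv_mul_cancel₀ hx.ne'
  nlinarith [sq_nonneg (Bf x)]

private lemma diffOn_Pf_Ioo : DifferentiableOn ℝ Pf (Ioo (0:ℝ) 1) := by
  intro x hx
  exact (hasDerivPf (ne_of_gt hx.1) (hBne hx.1 (ne_of_lt hx.2))).differentiableAt.differentiableWithinAt

private lemma diffOn_Pf_Ioi : DifferentiableOn ℝ Pf (Ioi (1:ℝ)) := by
  intro x hx
  have hx0 : (0:ℝ) < x := lt_trans one_pos hx
  exact (hasDerivPf hx0.ne' (hBne hx0 (ne_of_gt hx))).differentiableAt.differentiableWithinAt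

private lemma monoPf_Ioo : MonotoneOn Pf (Ioo (0:ℝ) 1) := by
  apply monotoneOn_of_deriv_nonneg (convex_Ioo 0 1) diffOn_Pf_Ioo.continuousOn
  · rw [interior_Ioo]; exact diffOn_Pf_Ioo
  · rw [interior_Ioo]
    intro x hx
    exact derivPf_nonneg hx.1 (hBne hx.1 (ne_of_lt hx.2))

private lemma monoPf_Ioi : MonotoneOn Pf (Ioi (1:ℝ)) := by
  apply monotoneOn_of_deriv_nonneg (convex_Ioi 1) diffOn_Pf_Ioi.continuousOn
  · rw [interior_Ioi]; exact diffOn_Pf_Ioi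
  · rw [interior_Ioi]
    intro x hx
    have hx0 : (0:ℝ) < x := lt_trans one_pos hx
    exact derivPf_nonneg hx0 (hBne hx0 (ne_of_gt hx))

private lemma diffOn_Qf_Ioo : DifferentiableOn ℝ Qf (Ioo (0:ℝ) 1) := by
  intro x hx
  exact (hasDerivQf (ne_of_gt hx.1) (hBne hx.1 (ne_of_lt hx.2))).differentiableAt.differentiableWithinAt

private lemma diffOn_Qf_Ioi : DifferentiableOn ℝ Qf (Ioi (1:ℝ)) := by
  intro x hx
  have hx0 : (0:ℝ) < x := lt_trans one_pos hx
  exact (hasDerivQf hx0.ne' (hBne hx0 (ne_of_gt hx))).differentiableAt.differentiableWithinAt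

private lemma monoQf_Ioo : MonotoneOn Qf (Ioo (0:ℝ) 1) := by
  apply monotoneOn_of_deriv_nonneg (convex_Ioo 0 1) diffOn_Qf_Ioo.continuousOn
  · rw [interior_Ioo]; exact diffOn_Qf_Ioo
  · rw [interior_Ioo]
    intro x hx
    exact derivQf_nonneg hx.1 (hBne hx.1 (ne_of_lt hx.2))

private lemma monoQf_Ioi : MonotoneOn Qf (Ioi (1:ℝ)) := by
  apply monotoneOn_of_deriv_nonneg (convex_Ioi 1) diffOn_Qf_Ioi.continuousOn
  · rw [interior_Ioi]; exact diffOn_Qf_Ioi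
  · rw [interior_Ioi]
    intro x hx
    have hx0 : (0:ℝ) < x := lt_trans one_pos hx
    exact derivQf_nonneg hx0 (hBne hx0 (ne_of_gt hx))

private lemma Pf_one : Pf 1 = 0 := by simp [Pf, hA1, hB1]

private lemma Qf_one : Qf 1 = 0 := by simp [Qf, Pf, hA1, hB1]

private lemma Pf_nonpos {x : ℝ} (hx : 0 < x) (hx1 : x ≤ 1) : Pf x ≤ 0 := by
  rcases eq_or_lt_of_le hx1 with rfl | h
  · rw [Pf_one]
  · exact div_nonpos_of_nonneg_of_nonpos (hA hx) (hBneg hx h).le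

private lemma Pf_nonneg {x : ℝ} (hx1 : 1 ≤ x) : 0 ≤ Pf x := by
  rcases eq_or_lt_of_le hx1 with rfl | h
  · rw [Pf_one]
  · exact div_nonneg (hA (lt_trans one_pos h)) (hBpos h).le

private lemma Qf_eq {x : ℝ} (hB : Bf x ≠ 0) : Qf x = ((Bf x)^2 - Af x) / Bf x := by
  simp only [Qf, Pf]
  field_simp

private lemma Qf_nonpos {x : ℝ} (hx : 0 < x) (hx1 : x ≤ 1) : Qf x ≤ 0 := by
  rcases eq_or_lt_of_le hx1 with rfl | h
  · rw [Qf_one]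
  · rw [Qf_eq (ne_of_lt (hBneg hx h))]
    apply div_nonpos_of_nonneg_of_nonpos _ (hBneg hx h).le
    have := keyBA hx
    linarith

private lemma Qf_nonneg {x : ℝ} (hx1 : 1 ≤ x) : 0 ≤ Qf x := by
  rcases eq_or_lt_of_le hx1 with rfl | h
  · rw [Qf_one]
  · rw [Qf_eq (ne_of_gt (hBpos h))]
    apply div_nonneg _ (hBpos h).le
    have := keyBA (lt_trans one_pos h)
    linarith

/-- global monotonicity glue -/
private lemma glue {F : ℝ → ℝ} (hIoo : MonotoneOn F (Ioo (0:ℝ) 1))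
    (hIoi : MonotoneOn F (Ioi (1:ℝ)))
    (hnp : ∀ x, 0 < x → x ≤ 1 → F x ≤ 0) (hnn : ∀ x, 1 ≤ x → 0 ≤ F x)
    {x y : ℝ} (hx : 0 < x) (hxy : x ≤ y) : F x ≤ F y := by
  rcases le_or_gt y 1 with hy1 | hy1
  · rcases eq_or_lt_of_le hy1 with rfl | hy1'
    · exact le_trans (hnp x hx hxy) (hnn _ le_rfl)
    · exact hIoo ⟨hx, lt_of_le_of_lt hxy hy1'⟩ ⟨lt_of_lt_of_le hx hxy, hy1'⟩ hxy
  · rcases le_or_gt x 1 with hx1 | hx1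
    · exact le_trans (hnp x hx hx1) (hnn y hy1.le)
    · exact hIoi hx1 (lt_of_lt_of_le hx1 hxy) hxy

theorem diff_quotient_lipschitz (expφ : ℝ → ℝ) (hpos : ∀ u, 0 < expφ u)
    (hinv : ∀ u, expφ u - 1 + Real.log (expφ u) = u)
    (f : ℝ → ℝ) (hf : ∀ u : ℝ, u ≠ 0 → f u = (expφ u - 1) / u) (hf0 : f 0 = 1 / 2) :
    ∀ u v : ℝ, |f u - f v| ≤ (1 / 2) * |u - v| := by
  have hB : ∀ u, Bf (expφ u) = u := fun u => hinv u
  -- f in terms of Pf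
  have hfP : ∀ u, f u = (1 + Pf (expφ u)) / 2 := by
    intro u
    rcases eq_or_ne u 0 with rfl | hu
    · -- expφ 0 = 1
      have h0 : expφ 0 = 1 := by
        by_contra hne
        have := hBne (hpos 0) hne
        rw [hB 0] at this
        exact this rfl
      rw [hf0, h0, Pf_one]
      norm_num
    · have hBu := hB u
      set e := expφ u with he
      have hBne' : Bf e ≠ 0 := by rw [hBu]; exact hu
      rw [hf u hu, ← he, ← hBu]
      have h2 : Af e + Bf e = 2 * (e - 1) := by simp only [Af, Bf]; ring
      rw [show Pf e = Af e / Bf e from rfl]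
      field_simp
      linear_combination (-1) * h2
  -- strict mono of expφ image ordering
  have hmono : ∀ u v : ℝ, u ≤ v → expφ u ≤ expφ v := by
    intro u v huv
    by_contra hcon
    push_neg at hcon
    have h1 : Bf (expφ v) < Bf (expφ u) := by
      have hlog := Real.log_lt_log (hpos v) hcon
      simp only [Bf]
      linarith
    rw [hB u, hB v] at h1
    linarith
  -- monotone bound on f
  have key : ∀ u v : ℝ, u ≤ v → 0 ≤ f v - f u ∧ f v - f u ≤ (v - u) / 2 := by
    intro u v huv
    have hxy := hmono u v huv
    have hx := hpos u
    constructor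
    · rw [hfP u, hfP v]
      have := glue monoPf_Ioo monoPf_Ioi (fun x a b => Pf_nonpos a b)
        (fun x a => Pf_nonneg a) hx hxy
      linarith
    · have hq := glue monoQf_Ioo monoQf_Ioi (fun x a b => Qf_nonpos a b)
        (fun x a => Qf_nonneg a) hx hxy
      simp only [Qf] at hq
      rw [hB u, hB v] at hq
      rw [hfP u, hfP v]
      linarith
  intro u v
  rcases le_total u v with h | h
  · obtain ⟨h1, h2⟩ := key u v h
    rw [abs_sub_comm (f u), abs_of_nonneg h1, abs_sub_comm u v,
      abs_of_nonneg (by linarith : (0:ℝ) ≤ v - u)]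
    linarith
  · obtain ⟨h1, h2⟩ := key v u h
    rw [abs_of_nonneg (by linarith), abs_of_nonneg (by linarith : (0:ℝ) ≤ u - v)]
    linarith
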